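/- For a Tychonoff space X, the space C_kh(X) is submetrizable if and only if X is almost σ-compact. -/

import Mathlib

open Set TopologicalSpace Filter

/-- The open-point topology on `C(X, ℝ)`, generated by the sets
`[U, r]⁻ = {f | ∃ x ∈ U, f x = r}` for `U` open in `X` and `r : ℝ`. -/
def openPointTop (X : Type*) [TopologicalSpace X] : TopologicalSpace C(X, ℝ) :=
  generateFrom {S | ∃ (U : Set X) (r : ℝ), IsOpen U ∧ S = {f : C(X, ℝ) | ∃ x ∈ U, f x = r}}

/-- The point-open topology (topology of pointwise convergence) on `C(X, ℝ)`. -/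
def pointOpenTop (X : Type*) [TopologicalSpace X] : TopologicalSpace C(X, ℝ) :=
  generateFrom {S | ∃ (x : X) (V : Set ℝ), IsOpen V ∧ S = {f : C(X, ℝ) | f x ∈ V}}

/-- The bi-compact-open topology `kh`: the join (coarsest common refinement) of the
compact-open topology and the open-point topology.  In Mathlib's order on
`TopologicalSpace` (where smaller = finer), this join is `⊓`. -/
def biCompactOpenTop (X : Type*) [TopologicalSpace X] : TopologicalSpace C(X, ℝ) :=
  ContinuousMap.compactOpen ⊓ openPointTop X

/-- The bi-point-open topology `ph`: the join of the point-open topology and the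
open-point topology. -/
def biPointOpenTop (X : Type*) [TopologicalSpace X] : TopologicalSpace C(X, ℝ) :=
  pointOpenTop X ⊓ openPointTop X

/-- `lc X` is the set of points of `X` having a compact neighborhood. -/
def lcSet (X : Type*) [TopologicalSpace X] : Set X :=
  {x | ∃ K : Set X, IsCompact K ∧ K ∈ nhds x}

/-- A set `A` is `Gδ`-dense if every nonempty `Gδ`-set meets it. -/
def GdeltaDense {X : Type*} [TopologicalSpace X] (A : Set X) : Prop :=
  ∀ G : Set X, IsGδ G → G.Nonempty → (G ∩ A).Nonempty

/-- A nonempty set `B` is an `R`-set if countably many continuous real functions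
map it onto all of `ℝ`. -/
def IsRSet {X : Type*} [TopologicalSpace X] (B : Set X) : Prop :=
  B.Nonempty ∧ ∃ f : ℕ → C(X, ℝ), (⋃ n, (f n) '' B) = Set.univ

/-- `X` is `R`-separable if there is a countable collection of `R`-sets such that
every nonempty open set contains a member of the collection. -/
def RSeparable (X : Type*) [TopologicalSpace X] : Prop :=
  ∃ S : ℕ → Set X, (∀ n, IsRSet (S n)) ∧
    ∀ U : Set X, IsOpen U → U.Nonempty → ∃ n, S n ⊆ U

/-- A topology is submetrizable if it is finer than some metrizable topology. -/
def Submetrizable (α : Type*) [t : TopologicalSpace α] : Prop :=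
  ∃ t' : TopologicalSpace α, @MetrizableSpace α t' ∧ t ≤ t'

/-- `X` is hemicompact if there is a sequence of compact sets cofinal in the
compact subsets of `X`. -/
def Hemicompact (X : Type*) [TopologicalSpace X] : Prop :=
  ∃ K : ℕ → Set X, (∀ n, IsCompact (K n)) ∧ ∀ A : Set X, IsCompact A → ∃ n, A ⊆ K n

/-- `X` is almost σ-compact if it has a dense σ-compact subset. -/
def AlmostSigmaCompact (X : Type*) [TopologicalSpace X] : Prop :=
  ∃ K : ℕ → Set X, (∀ n, IsCompact (K n)) ∧ Dense (⋃ n, K n)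

lemma easy_dir {X : Type*} [TopologicalSpace X] (h : AlmostSigmaCompact X) :
    @Submetrizable C(X, ℝ) (biCompactOpenTop X) := by
  obtain ⟨K, hK, hdense⟩ := h
  haveI : ∀ n, CompactSpace (K n) := fun n => isCompact_iff_compactSpace.mp (hK n)
  haveI : MetrizableSpace (∀ n : ℕ, C(K n, ℝ)) := inferInstance
  set Φ : C(X, ℝ) → ∀ n : ℕ, C(K n, ℝ) := fun f n => f.restrict (K n) with hΦ
  have hcont : Continuous Φ := continuous_pi fun n => ContinuousMap.continuous_restrict (K n)
  have hinj : Function.Injective Φ := by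
    intro f g hfg
    apply ContinuousMap.coe_injective
    refine Continuous.ext_on hdense f.continuous g.continuous ?_
    intro y hy
    rcases mem_iUnion.mp hy with ⟨n, hn⟩
    have := congrFun (congrArg (fun F : ∀ m : ℕ, C(K m, ℝ) => ⇑(F n)) hfg) ⟨y, hn⟩
    simpa [hΦ] using this
  refine ⟨TopologicalSpace.induced Φ inferInstance, ?_, ?_⟩
  · letI := TopologicalSpace.induced Φ (inferInstance : TopologicalSpace (∀ n : ℕ, C(K n, ℝ)))
    exact Topology.IsEmbedding.metrizableSpace (f := Φ) ⟨⟨rfl⟩, hinj⟩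
  · exact inf_le_left.trans (continuous_iff_le_induced.mp hcont)

lemma hard_dir {X : Type*} [TopologicalSpace X] [T2Space X] [CompletelyRegularSpace X]
    (h : @Submetrizable C(X, ℝ) (biCompactOpenTop X)) : AlmostSigmaCompact X := by
  classical
  obtain ⟨t', ht'm, hle⟩ := h
  have hsing : @IsGδ C(X, ℝ) t' {0} := by
    letI := t'; haveI := ht'm
    exact IsGδ.singleton 0
  obtain ⟨T, hTopen, hTc, hTeq⟩ := hsing
  obtain ⟨g, hg⟩ := (hTc.insert univ).exists_eq_range (insert_nonempty _ _)
  have hginter : (⋂ n, g n) = {(0 : C(X, ℝ))} := by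
    rw [← sInter_range, ← hg, sInter_insert, univ_inter]
    exact hTeq.symm
  have h0g : ∀ n, (0 : C(X, ℝ)) ∈ g n := by
    have h00 : (0 : C(X, ℝ)) ∈ ⋂ n, g n := by rw [hginter]; exact mem_singleton _
    exact fun n => mem_iInter.mp h00 n
  have hgopen : ∀ n, @IsOpen C(X, ℝ) (biCompactOpenTop X) (g n) := by
    intro n
    have hmem : g n ∈ insert univ T := hg ▸ mem_range_self n
    rcases mem_insert_iff.mp hmem with h1 | h2
    · rw [h1]; exact @isOpen_univ _ (biCompactOpenTop X)
    · exact (hTopen _ h2).mono hle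
  set sb : Set (Set C(X, ℝ)) :=
    image2 (fun K U => {f : C(X, ℝ) | MapsTo f K U}) {K : Set X | IsCompact K}
        {U : Set ℝ | IsOpen U} ∪
      {S | ∃ (U : Set X) (r : ℝ), IsOpen U ∧ S = {f : C(X, ℝ) | ∃ x ∈ U, f x = r}} with hsb
  have htgen : biCompactOpenTop X = generateFrom sb := by
    rw [hsb, generateFrom_union, biCompactOpenTop, ContinuousMap.compactOpen_eq, openPointTop]
  have hbasis := @isTopologicalBasis_of_subbasis C(X, ℝ) (biCompactOpenTop X) sb htgen
  have key : ∀ n, ∃ D : Set X, IsCompact D ∧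
      ∀ f : C(X, ℝ), (∀ x ∈ D, f x = 0) → f ∈ g n := by
    intro n
    obtain ⟨v, hvb, h0v, hvsub⟩ := @IsTopologicalBasis.exists_subset_of_mem_open _ (biCompactOpenTop X) _ hbasis _ _ (h0g n) (hgopen n)
    obtain ⟨F, ⟨hFfin, hFsub⟩, rfl⟩ := hvb
    have hchoice : ∀ S : Set C(X, ℝ), ∃ C : Set X, S ∈ F →
        IsCompact C ∧ ∀ f : C(X, ℝ), (∀ x ∈ C, f x = 0) → f ∈ S := by
      intro S
      by_cases hSF : S ∈ F
      · have h0S : (0 : C(X, ℝ)) ∈ S := mem_sInter.mp h0v S hSF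
        rcases hFsub hSF with hck | hop
        · obtain ⟨Kc, hKc, U, hU, rfl⟩ := hck
          refine ⟨Kc, fun _ => ⟨hKc, fun f hf x hx => ?_⟩⟩
          have h0U : (0 : ℝ) ∈ U := by simpa using h0S hx
          rw [hf x hx]; exact h0U
        · obtain ⟨U, r, hU, rfl⟩ := hop
          obtain ⟨x, hxU, hx0⟩ := h0S
          refine ⟨{x}, fun _ => ⟨isCompact_singleton, fun f hf => ⟨x, hxU, ?_⟩⟩⟩
          rw [hf x rfl]
          simpa using hx0
      · exact ⟨∅, fun hc => absurd hc hSF⟩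
    choose C hC using hchoice
    refine ⟨⋃ S ∈ F, C S, hFfin.isCompact_biUnion fun S hS => (hC S hS).1, ?_⟩
    intro f hf
    exact hvsub (mem_sInter.mpr fun S hS => (hC S hS).2 f fun x hx => hf x (mem_biUnion hS hx))
  choose D hDc hD using key
  refine ⟨D, hDc, ?_⟩
  by_contra hnd
  obtain ⟨p, hp⟩ : ∃ p, p ∉ closure (⋃ n, D n) := by
    by_contra hcon
    push_neg at hcon
    exact hnd hcon
  obtain ⟨φ, hφc, hφp, hφ1⟩ :=
    CompletelyRegularSpace.completely_regular p (closure (⋃ n, D n)) isClosed_closure hp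
  set g0 : C(X, ℝ) := ⟨fun y => 1 - (φ y : ℝ),
    continuous_const.sub (continuous_subtype_val.comp hφc)⟩ with hg0def
  have hg0mem : g0 ∈ ⋂ n, g n := by
    refine mem_iInter.mpr fun n => hD n g0 fun x hx => ?_
    have hx1 : φ x = 1 := hφ1 (subset_closure (mem_iUnion.mpr ⟨n, hx⟩))
    show (1 : ℝ) - (φ x : ℝ) = 0
    rw [hx1]
    norm_num
  rw [hginter] at hg0mem
  have h1 : g0 p = 0 := by rw [mem_singleton_iff.mp hg0mem]; simp
  rw [hg0def] at h1
  simp [hφp] at h1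

theorem stmt12 {X : Type*} [TopologicalSpace X] [T2Space X] [CompletelyRegularSpace X] :
    @Submetrizable C(X, ℝ) (biCompactOpenTop X) ↔ AlmostSigmaCompact X :=
  ⟨hard_dir, easy_dir⟩
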